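/- arXiv:1412.0881 — 5 statements merged into one kernel-verified Lean document; each statement's English description precedes it below -/
import Mathlib

section
/- For every colouring of ℚ with finitely many colours, there exists a non-identity order automorphism of ℚ that preserves the colouring. In other words, the group of order automorphisms of ℚ admits no distinguishing colouring with finitely many colours. -/
noncomputable section

open Order

namespace QNFD

variable {C : Type} {X : Type} [LinearOrder X]

/-- Colour-preserving partial order isomorphisms, encoded as finite sets of pairs. -/
def CPI (d : X → C) : Type _ :=
  { f : Finset (X × X) //
    (∀ p ∈ f, d (Prod.fst p) = d (Prod.snd p)) ∧
    ∀ p ∈ f, ∀ q ∈ f,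
      cmp (Prod.fst p) (Prod.fst q) = cmp (Prod.snd p) (Prod.snd q) }

instance (d : X → C) : Preorder (CPI d) := Subtype.preorder _

variable {d : X → C}

/-- Every occurring colour occurs between any finite lower and upper set. -/
def Dense2 (d : X → C) : Prop :=
  ∀ (lo hi : Finset X), (∀ x ∈ lo, ∀ y ∈ hi, x < y) →
    ∀ k : C, (∃ x : X, d x = k) →
      ∃ m : X, (∀ x ∈ lo, x < m) ∧ (∀ y ∈ hi, m < y) ∧ d m = k

theorem exists_across (H : Dense2 d) (f : CPI d) (x : X) :
    ∃ y : X, d y = d x ∧ ∀ p ∈ f.val, cmp (Prod.fst p) x = cmp (Prod.snd p) y := by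
  by_cases h : ∃ y, (x, y) ∈ f.val
  · obtain ⟨y, hy⟩ := h
    exact ⟨y, (f.prop.1 _ hy).symm, fun p hp => f.prop.2 _ hp _ hy⟩
  obtain ⟨m, hm1, hm2, hm3⟩ := H ((f.val.filter fun p : X × X => p.1 < x).image Prod.snd)
      ((f.val.filter fun p : X × X => x < p.1).image Prod.snd)
      (by
        intro u hu v hv
        rw [Finset.mem_image] at hu hv
        rcases hu with ⟨p, hp1, rfl⟩
        rcases hv with ⟨q, hq1, rfl⟩
        rw [Finset.mem_filter] at hp1 hq1
        rw [← lt_iff_lt_of_cmp_eq_cmp (f.prop.2 _ hp1.1 _ hq1.1)]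
        exact lt_trans hp1.2 hq1.2)
      (d x) ⟨x, rfl⟩
  refine ⟨m, hm3, ?_⟩
  rintro ⟨p1, p2⟩ hp
  have hne : p1 ≠ x := fun he => h ⟨p2, he ▸ hp⟩
  rcases lt_or_gt_of_ne hne with hl | hr
  · have h3 : p1 < x ∧ p2 < m :=
      ⟨hl, hm1 _ (Finset.mem_image.mpr ⟨(p1, p2), Finset.mem_filter.mpr ⟨hp, hl⟩, rfl⟩)⟩
    rw [← cmp_eq_lt_iff, ← cmp_eq_lt_iff] at h3
    exact h3.1.trans h3.2.symm
  · have h3 : x < p1 ∧ m < p2 :=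
      ⟨hr, hm2 _ (Finset.mem_image.mpr ⟨(p1, p2), Finset.mem_filter.mpr ⟨hp, hr⟩, rfl⟩)⟩
    rw [← cmp_eq_gt_iff, ← cmp_eq_gt_iff] at h3
    exact h3.1.trans h3.2.symm

theorem exists_across' (H : Dense2 d) (f : CPI d) (y : X) :
    ∃ x : X, d x = d y ∧ ∀ p ∈ f.val, cmp (Prod.fst p) x = cmp (Prod.snd p) y := by
  by_cases h : ∃ x, (x, y) ∈ f.val
  · obtain ⟨x, hx⟩ := h
    exact ⟨x, f.prop.1 _ hx, fun p hp => f.prop.2 _ hp _ hx⟩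
  obtain ⟨m, hm1, hm2, hm3⟩ := H ((f.val.filter fun p : X × X => p.2 < y).image Prod.fst)
      ((f.val.filter fun p : X × X => y < p.2).image Prod.fst)
      (by
        intro u hu v hv
        rw [Finset.mem_image] at hu hv
        rcases hu with ⟨p, hp1, rfl⟩
        rcases hv with ⟨q, hq1, rfl⟩
        rw [Finset.mem_filter] at hp1 hq1
        rw [lt_iff_lt_of_cmp_eq_cmp (f.prop.2 _ hp1.1 _ hq1.1)]
        exact lt_trans hp1.2 hq1.2)
      (d y) ⟨y, rfl⟩
  refine ⟨m, hm3, ?_⟩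
  rintro ⟨p1, p2⟩ hp
  have hne : p2 ≠ y := fun he => h ⟨p1, he ▸ hp⟩
  rcases lt_or_gt_of_ne hne with hl | hr
  · have h3 : p1 < m ∧ p2 < y :=
      ⟨hm1 _ (Finset.mem_image.mpr ⟨(p1, p2), Finset.mem_filter.mpr ⟨hp, hl⟩, rfl⟩), hl⟩
    rw [← cmp_eq_lt_iff, ← cmp_eq_lt_iff] at h3
    exact h3.1.trans h3.2.symm
  · have h3 : m < p1 ∧ y < p2 :=
      ⟨hm2 _ (Finset.mem_image.mpr ⟨(p1, p2), Finset.mem_filter.mpr ⟨hp, hr⟩, rfl⟩), hr⟩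
    rw [← cmp_eq_gt_iff, ← cmp_eq_gt_iff] at h3
    exact h3.1.trans h3.2.symm

/-- Extend a colour-preserving partial iso by a given pair. -/
theorem extend_pair (f : CPI d) (x y : X) (hc : d y = d x)
    (hcmp : ∀ p ∈ f.val, cmp (Prod.fst p) x = cmp (Prod.snd p) y) :
    ∃ g : CPI d, (x, y) ∈ g.val ∧ f ≤ g := by
  refine ⟨⟨insert (x, y) f.val, ?_, ?_⟩, Finset.mem_insert_self _ _, Finset.subset_insert _ _⟩
  · intro p hp
    rw [Finset.mem_insert] at hp
    rcases hp with rfl | hp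
    · exact hc.symm
    · exact f.prop.1 _ hp
  · intro p hp q hq
    rw [Finset.mem_insert] at hp hq
    rcases hp with rfl | hp <;> rcases hq with rfl | hq
    · simp only [cmp_self_eq_eq]
    · rw [cmp_eq_cmp_symm]
      exact hcmp _ hq
    · exact hcmp _ hp
    · exact f.prop.2 _ hp _ hq

def definedAtLeft (H : Dense2 d) (x : X) : Cofinal (CPI d) where
  carrier := {f | ∃ y : X, (x, y) ∈ f.val}
  isCofinal f := by
    obtain ⟨y, hc, hcmp⟩ := exists_across H f x
    obtain ⟨g, hg, hfg⟩ := extend_pair f x y hc hcmp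
    exact ⟨g, ⟨y, hg⟩, hfg⟩

def definedAtRight (H : Dense2 d) (y : X) : Cofinal (CPI d) where
  carrier := {f | ∃ x : X, (x, y) ∈ f.val}
  isCofinal f := by
    obtain ⟨x, hc, hcmp⟩ := exists_across' H f y
    obtain ⟨g, hg, hfg⟩ := extend_pair f x y hc.symm hcmp
    exact ⟨g, ⟨x, hg⟩, hfg⟩

theorem exists_auto [Countable X] (H : Dense2 d) (p₀ q₀ : X) (hne : p₀ ≠ q₀)
    (hc : d p₀ = d q₀) :
    ∃ φ : X ≃o X, φ p₀ = q₀ ∧ ∀ x, d (φ x) = d x := by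
  classical
  cases nonempty_encodable (X ⊕ X)
  let init : CPI d := ⟨{(p₀, q₀)}, by
      constructor
      · intro p hp
        rw [Finset.mem_singleton] at hp
        subst hp
        exact hc
      · intro p hp q hq
        rw [Finset.mem_singleton] at hp hq
        subst hp; subst hq
        simp only [cmp_self_eq_eq]⟩
  let to_cofinal : X ⊕ X → Cofinal (CPI d) := fun s =>
    Sum.recOn s (definedAtLeft H) (definedAtRight H)
  let I := idealOfCofinals init to_cofinal
  have hF0 : ∀ x : X, ∃ y, ∃ f ∈ I, (x, y) ∈ f.val := by
    intro x
    obtain ⟨f, ⟨y, hy⟩, hfI⟩ := cofinal_meets_idealOfCofinals init to_cofinal (Sum.inl x)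
    exact ⟨y, f, hfI, hy⟩
  have hG0 : ∀ y : X, ∃ x, ∃ f ∈ I, (x, y) ∈ f.val := by
    intro y
    obtain ⟨f, ⟨x, hx⟩, hfI⟩ := cofinal_meets_idealOfCofinals init to_cofinal (Sum.inr y)
    exact ⟨x, f, hfI, hx⟩
  choose F hF using hF0
  choose G hG using hG0
  have key : ∀ x y : X, cmp x (G y) = cmp (F x) y := by
    intro x y
    obtain ⟨f, hf, hxf⟩ := hF x
    obtain ⟨g, hg, hyg⟩ := hG y
    obtain ⟨m, _, fm, gm⟩ := I.directed _ hf _ hg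
    exact m.prop.2 (x, F x) (fm hxf) (G y, y) (gm hyg)
  refine ⟨OrderIso.ofCmpEqCmp F G key, ?_, ?_⟩
  · show F p₀ = q₀
    obtain ⟨f, hf, hxf⟩ := hF p₀
    obtain ⟨m, _, fm, im⟩ := I.directed _ hf _ (mem_idealOfCofinals init to_cofinal)
    have h2 := m.prop.2 (p₀, F p₀) (fm hxf) (p₀, q₀) (im (Finset.mem_singleton_self _))
    rw [cmp_self_eq_eq] at h2
    exact (cmp_eq_eq_iff _ _).mp h2.symm
  · intro x
    obtain ⟨f, hf, hxf⟩ := hF x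
    exact (f.prop.1 _ hxf).symm

end QNFD

end

theorem qNoFiniteDistinguishing (C : Type) [Finite C] (c : ℚ → C) :
    ∃ γ : ℚ ≃o ℚ, γ ≠ OrderIso.refl ℚ ∧ ∀ q : ℚ, c (γ q) = c q := by
  classical
  have : Fintype C := Fintype.ofFinite C
  -- the finite set of colours occurring in an open interval
  let occ : ℚ → ℚ → Finset C := fun a b =>
    Finset.univ.filter fun k => ∃ q, a < q ∧ q < b ∧ c q = k
  have occ_mem : ∀ {a b : ℚ} {k : C}, k ∈ occ a b ↔ ∃ q, a < q ∧ q < b ∧ c q = k := by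
    intro a b k
    simp only [occ, Finset.mem_filter, Finset.mem_univ, true_and]
  have occ_mono : ∀ {a b u v : ℚ}, a ≤ u → v ≤ b → occ u v ⊆ occ a b := by
    intro a b u v hau hvb k hk
    rw [occ_mem] at hk ⊢
    obtain ⟨q, h1, h2, h3⟩ := hk
    exact ⟨q, lt_of_le_of_lt hau h1, lt_of_lt_of_le h2 hvb, h3⟩
  -- minimize the number of occurring colours
  let S : Set ℕ := {n | ∃ a b : ℚ, a < b ∧ (occ a b).card = n}
  have hS : S.Nonempty := ⟨(occ 0 1).card, 0, 1, by norm_num, rfl⟩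
  obtain ⟨a, b, hab, hcard⟩ : sInf S ∈ S := Nat.sInf_mem hS
  have hmin : ∀ u v : ℚ, a ≤ u → v ≤ b → u < v → occ u v = occ a b := by
    intro u v hau hvb huv
    apply Finset.eq_of_subset_of_card_le (occ_mono hau hvb)
    rw [hcard]
    exact Nat.sInf_le ⟨u, v, huv, rfl⟩
  set X := ↥(Set.Ioo a b) with hX
  let d : X → C := fun x => c x.1
  have key : ∀ (u v : ℚ), a ≤ u → v ≤ b → u < v → ∀ k : C, (∃ x : X, d x = k) →
      ∃ m : ℚ, u < m ∧ m < v ∧ c m = k := by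
    intro u v hau hvb huv k hk
    obtain ⟨⟨x, hx⟩, hxk⟩ := hk
    have hkocc : k ∈ occ a b := occ_mem.mpr ⟨x, hx.1, hx.2, hxk⟩
    rw [← hmin u v hau hvb huv, occ_mem] at hkocc
    exact hkocc
  have HD : QNFD.Dense2 d := by
    intro lo hi hlohi k hk
    have main : ∀ u v : ℚ, a ≤ u → v ≤ b → u < v →
        (∀ x ∈ lo, (x : ℚ) ≤ u) → (∀ y ∈ hi, v ≤ (y : ℚ)) →
        ∃ m : X, (∀ x ∈ lo, x < m) ∧ (∀ y ∈ hi, m < y) ∧ d m = k := by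
      intro u v hau hvb huv hup hdown
      obtain ⟨m, h1, h2, h3⟩ := key u v hau hvb huv k hk
      refine ⟨⟨m, lt_of_le_of_lt hau h1, lt_of_lt_of_le h2 hvb⟩, ?_, ?_, h3⟩
      · intro x hx
        exact Subtype.coe_lt_coe.mp (lt_of_le_of_lt (hup x hx) h1)
      · intro y hy
        exact Subtype.coe_lt_coe.mp (lt_of_lt_of_le h2 (hdown y hy))
    by_cases hlo : lo.Nonempty <;> by_cases hhi : hi.Nonempty
    · refine main ((lo.max' hlo : X) : ℚ) ((hi.min' hhi : X) : ℚ)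
        (lo.max' hlo).2.1.le (hi.min' hhi).2.2.le
        (Subtype.coe_lt_coe.mpr (hlohi _ (lo.max'_mem hlo) _ (hi.min'_mem hhi)))
        (fun x hx => Subtype.coe_le_coe.mpr (Finset.le_max' lo x hx))
        (fun y hy => Subtype.coe_le_coe.mpr (Finset.min'_le hi y hy))
    · refine main ((lo.max' hlo : X) : ℚ) b (lo.max' hlo).2.1.le le_rfl (lo.max' hlo).2.2
        (fun x hx => Subtype.coe_le_coe.mpr (Finset.le_max' lo x hx))
        (fun y hy => absurd ⟨y, hy⟩ hhi)
    · refine main a ((hi.min' hhi : X) : ℚ) le_rfl (hi.min' hhi).2.2.le (hi.min' hhi).2.1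
        (fun x hx => absurd ⟨x, hx⟩ hlo)
        (fun y hy => Subtype.coe_le_coe.mpr (Finset.min'_le hi y hy))
    · exact main a b le_rfl le_rfl hab (fun x hx => absurd ⟨x, hx⟩ hlo)
        (fun y hy => absurd ⟨y, hy⟩ hhi)
  obtain ⟨x₀, hx₀⟩ := exists_between hab
  let p₀ : X := ⟨x₀, hx₀⟩
  obtain ⟨m, hm1, -, hm3⟩ := HD {p₀} ∅ (by simp) (d p₀) ⟨p₀, rfl⟩
  have hp₀m : p₀ < m := hm1 p₀ (Finset.mem_singleton_self _)
  obtain ⟨φ, hφp, hφc⟩ := QNFD.exists_auto HD p₀ m (ne_of_lt hp₀m) hm3.symm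
  -- extend φ to an order automorphism of ℚ fixing the complement of (a, b)
  let f : ℚ → ℚ := fun x => if h : x ∈ Set.Ioo a b then ((φ ⟨x, h⟩ : X) : ℚ) else x
  let g : ℚ → ℚ := fun x => if h : x ∈ Set.Ioo a b then ((φ.symm ⟨x, h⟩ : X) : ℚ) else x
  have hf_in : ∀ (x : ℚ) (h : x ∈ Set.Ioo a b), f x = ((φ ⟨x, h⟩ : X) : ℚ) :=
    fun x h => dif_pos h
  have hf_out : ∀ x : ℚ, x ∉ Set.Ioo a b → f x = x := fun x h => dif_neg h
  have hg_in : ∀ (x : ℚ) (h : x ∈ Set.Ioo a b), g x = ((φ.symm ⟨x, h⟩ : X) : ℚ) :=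
    fun x h => dif_pos h
  have hg_out : ∀ x : ℚ, x ∉ Set.Ioo a b → g x = x := fun x h => dif_neg h
  have hgf : ∀ x, g (f x) = x := by
    intro x
    by_cases h : x ∈ Set.Ioo a b
    · rw [hf_in x h]
      have h2 : ((φ ⟨x, h⟩ : X) : ℚ) ∈ Set.Ioo a b := (φ ⟨x, h⟩).2
      rw [hg_in _ h2]
      have h3 : (⟨((φ ⟨x, h⟩ : X) : ℚ), h2⟩ : X) = φ ⟨x, h⟩ := rfl
      rw [h3, φ.symm_apply_apply]
    · rw [hf_out x h, hg_out x h]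
  have hfg : ∀ x, f (g x) = x := by
    intro x
    by_cases h : x ∈ Set.Ioo a b
    · rw [hg_in x h]
      have h2 : ((φ.symm ⟨x, h⟩ : X) : ℚ) ∈ Set.Ioo a b := (φ.symm ⟨x, h⟩).2
      rw [hf_in _ h2]
      have h3 : (⟨((φ.symm ⟨x, h⟩ : X) : ℚ), h2⟩ : X) = φ.symm ⟨x, h⟩ := rfl
      rw [h3, φ.apply_symm_apply]
    · rw [hg_out x h, hf_out x h]
  have hmono : StrictMono f := by
    intro x y hxy
    by_cases hx : x ∈ Set.Ioo a b <;> by_cases hy : y ∈ Set.Ioo a b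
    · rw [hf_in x hx, hf_in y hy]
      exact Subtype.coe_lt_coe.mpr (φ.strictMono (Subtype.mk_lt_mk.mpr hxy))
    · rw [hf_in x hx, hf_out y hy]
      have hby : b ≤ y := by
        by_contra hby
        push_neg at hby
        exact hy ⟨lt_trans hx.1 hxy, hby⟩
      exact lt_of_lt_of_le (φ ⟨x, hx⟩).2.2 hby
    · rw [hf_out x hx, hf_in y hy]
      have hxa : x ≤ a := by
        by_contra h'
        push_neg at h'
        exact hx ⟨h', lt_trans hxy hy.2⟩
      exact lt_of_le_of_lt hxa (φ ⟨y, hy⟩).2.1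
    · rw [hf_out x hx, hf_out y hy]
      exact hxy
  let γ : ℚ ≃o ℚ :=
    { toFun := f, invFun := g, left_inv := hgf, right_inv := hfg,
      map_rel_iff' := @fun x y => hmono.le_iff_le }
  have hγ : ∀ x, γ x = f x := fun _ => rfl
  refine ⟨γ, ?_, ?_⟩
  · intro hid
    have h2 : γ x₀ = (m : ℚ) := by
      rw [hγ, hf_in x₀ hx₀]
      show ((φ p₀ : X) : ℚ) = (m : ℚ)
      rw [hφp]
    rw [hid] at h2
    simp only [OrderIso.refl_apply] at h2
    have h4 : (p₀ : ℚ) < (m : ℚ) := Subtype.coe_lt_coe.mpr hp₀m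
    rw [← h2] at h4
    exact lt_irrefl _ h4
  · intro q
    rw [hγ]
    by_cases h : q ∈ Set.Ioo a b
    · rw [hf_in q h]
      exact hφc ⟨q, h⟩
    · rw [hf_out q h]
end

section
/- For any two colours, i.e. any colouring c : ℚ → Bool, there is a non-identity order-preserving bijection γ of ℚ with c(γ(q)) = c(q) for all q. -/
namespace QColorAux

open Order

variable (c : ℚ → Bool)

/-- Colored partial isomorphisms. -/
def CPartialIso : Type :=
  { f : Finset (ℚ × ℚ) //
    (∀ p ∈ f, ∀ q ∈ f, cmp (Prod.fst p) (Prod.fst q) = cmp (Prod.snd p) (Prod.snd q)) ∧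
      ∀ p ∈ f, c (Prod.fst p) = c (Prod.snd p) }

instance : Preorder (CPartialIso c) := Subtype.preorder _

variable {c}

theorem exists_between_color (H : ∀ (k : Bool) (x y : ℚ), x < y → ∃ z, x < z ∧ z < y ∧ c z = k)
    (k : Bool) (lo hi : Finset ℚ) (lo_lt_hi : ∀ x ∈ lo, ∀ y ∈ hi, x < y) :
    ∃ m : ℚ, c m = k ∧ (∀ x ∈ lo, x < m) ∧ ∀ y ∈ hi, m < y := by
  by_cases nlo : lo.Nonempty <;> by_cases nhi : hi.Nonempty
  · obtain ⟨m, hm1, hm2, hm3⟩ :=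
      H k _ _ (lo_lt_hi _ (lo.max'_mem nlo) _ (hi.min'_mem nhi))
    exact ⟨m, hm3, fun x hx => lt_of_le_of_lt (lo.le_max' x hx) hm1,
      fun y hy => lt_of_lt_of_le hm2 (hi.min'_le y hy)⟩
  · obtain ⟨m, hm1, _, hm3⟩ := H k (lo.max' nlo) (lo.max' nlo + 1) (by linarith)
    exact ⟨m, hm3, fun x hx => lt_of_le_of_lt (lo.le_max' x hx) hm1,
      fun y hy => absurd ⟨y, hy⟩ nhi⟩
  · obtain ⟨m, _, hm2, hm3⟩ := H k (hi.min' nhi - 1) (hi.min' nhi) (by linarith)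
    exact ⟨m, hm3, fun x hx => absurd ⟨x, hx⟩ nlo,
      fun y hy => lt_of_lt_of_le hm2 (hi.min'_le y hy)⟩
  · obtain ⟨m, _, _, hm3⟩ := H k 0 1 (by norm_num)
    exact ⟨m, hm3, fun x hx => absurd ⟨x, hx⟩ nlo, fun y hy => absurd ⟨y, hy⟩ nhi⟩

theorem exists_across (H : ∀ (k : Bool) (x y : ℚ), x < y → ∃ z, x < z ∧ z < y ∧ c z = k)
    (f : CPartialIso c) (a : ℚ) :
    ∃ b : ℚ, c b = c a ∧ ∀ p ∈ f.val, cmp (Prod.fst p) a = cmp (Prod.snd p) b := by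
  by_cases h : ∃ b, (a, b) ∈ f.val
  · cases' h with b hb
    exact ⟨b, (f.prop.2 _ hb).symm, fun p hp => f.prop.1 _ hp _ hb⟩
  have key :
    ∀ x ∈ (f.val.filter fun p : ℚ × ℚ => p.fst < a).image Prod.snd,
      ∀ y ∈ (f.val.filter fun p : ℚ × ℚ => a < p.fst).image Prod.snd, x < y := by
    intro x hx y hy
    rw [Finset.mem_image] at hx hy
    rcases hx with ⟨p, hp1, rfl⟩
    rcases hy with ⟨q, hq1, rfl⟩
    rw [Finset.mem_filter] at hp1 hq1
    rw [← lt_iff_lt_of_cmp_eq_cmp (f.prop.1 _ hp1.1 _ hq1.1)]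
    exact lt_trans hp1.right hq1.right
  obtain ⟨b, hbc, hb1, hb2⟩ := exists_between_color H (c a) _ _ key
  refine ⟨b, hbc, ?_⟩
  rintro ⟨p1, p2⟩ hp
  have hne : p1 ≠ a := fun he => h ⟨p2, he ▸ hp⟩
  cases' lt_or_gt_of_ne hne with hl hr
  · have h2 : p2 < b := hb1 _ (Finset.mem_image.mpr ⟨(p1, p2), Finset.mem_filter.mpr ⟨hp, hl⟩, rfl⟩)
    rw [show cmp p1 a = Ordering.lt from (cmp_eq_lt_iff _ _).2 hl,
      show cmp p2 b = Ordering.lt from (cmp_eq_lt_iff _ _).2 h2]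
  · have h2 : b < p2 := hb2 _ (Finset.mem_image.mpr ⟨(p1, p2), Finset.mem_filter.mpr ⟨hp, hr⟩, rfl⟩)
    rw [show cmp p1 a = Ordering.gt from (cmp_eq_gt_iff _ _).2 hr,
      show cmp p2 b = Ordering.gt from (cmp_eq_gt_iff _ _).2 h2]

theorem exists_across' (H : ∀ (k : Bool) (x y : ℚ), x < y → ∃ z, x < z ∧ z < y ∧ c z = k)
    (f : CPartialIso c) (b : ℚ) :
    ∃ a : ℚ, c a = c b ∧ ∀ p ∈ f.val, cmp (Prod.snd p) b = cmp (Prod.fst p) a := by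
  by_cases h : ∃ a, (a, b) ∈ f.val
  · cases' h with a ha
    exact ⟨a, f.prop.2 _ ha, fun p hp => (f.prop.1 _ hp _ ha).symm⟩
  have key :
    ∀ x ∈ (f.val.filter fun p : ℚ × ℚ => p.snd < b).image Prod.fst,
      ∀ y ∈ (f.val.filter fun p : ℚ × ℚ => b < p.snd).image Prod.fst, x < y := by
    intro x hx y hy
    rw [Finset.mem_image] at hx hy
    rcases hx with ⟨p, hp1, rfl⟩
    rcases hy with ⟨q, hq1, rfl⟩
    rw [Finset.mem_filter] at hp1 hq1
    rw [lt_iff_lt_of_cmp_eq_cmp (f.prop.1 _ hp1.1 _ hq1.1)]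
    exact lt_trans hp1.right hq1.right
  obtain ⟨a, hac, ha1, ha2⟩ := exists_between_color H (c b) _ _ key
  refine ⟨a, hac, ?_⟩
  rintro ⟨p1, p2⟩ hp
  have hne : p2 ≠ b := fun he => h ⟨p1, he ▸ hp⟩
  cases' lt_or_gt_of_ne hne with hl hr
  · have h2 : p1 < a := ha1 _ (Finset.mem_image.mpr ⟨(p1, p2), Finset.mem_filter.mpr ⟨hp, hl⟩, rfl⟩)
    rw [show cmp p2 b = Ordering.lt from (cmp_eq_lt_iff _ _).2 hl,
      show cmp p1 a = Ordering.lt from (cmp_eq_lt_iff _ _).2 h2]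
  · have h2 : a < p1 := ha2 _ (Finset.mem_image.mpr ⟨(p1, p2), Finset.mem_filter.mpr ⟨hp, hr⟩, rfl⟩)
    rw [show cmp p2 b = Ordering.gt from (cmp_eq_gt_iff _ _).2 hr,
      show cmp p1 a = Ordering.gt from (cmp_eq_gt_iff _ _).2 h2]

/-- Extend a colored partial iso to be defined at `a` on the left. -/
def definedAtLeft (H : ∀ (k : Bool) (x y : ℚ), x < y → ∃ z, x < z ∧ z < y ∧ c z = k)
    (a : ℚ) : Cofinal (CPartialIso c) where
  carrier := {f | ∃ b : ℚ, (a, b) ∈ f.val}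
  isCofinal f := by
    obtain ⟨b, hbc, a_b⟩ := exists_across H f a
    refine
      ⟨⟨insert (a, b) f.val, fun p hp q hq => ?_, fun p hp => ?_⟩,
        ⟨b, Finset.mem_insert_self _ _⟩, Finset.subset_insert _ _⟩
    · rw [Finset.mem_insert] at hp hq
      rcases hp with (rfl | pf) <;> rcases hq with (rfl | qf)
      · simp only [cmp_self_eq_eq]
      · rw [cmp_eq_cmp_symm]
        exact a_b _ qf
      · exact a_b _ pf
      · exact f.prop.1 _ pf _ qf
    · rw [Finset.mem_insert] at hp
      rcases hp with (rfl | pf)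
      · exact hbc.symm
      · exact f.prop.2 _ pf

def definedAtRight (H : ∀ (k : Bool) (x y : ℚ), x < y → ∃ z, x < z ∧ z < y ∧ c z = k)
    (b : ℚ) : Cofinal (CPartialIso c) where
  carrier := {f | ∃ a : ℚ, (a, b) ∈ f.val}
  isCofinal f := by
    obtain ⟨a, hac, a_b⟩ := exists_across' H f b
    refine
      ⟨⟨insert (a, b) f.val, fun p hp q hq => ?_, fun p hp => ?_⟩,
        ⟨a, Finset.mem_insert_self _ _⟩, Finset.subset_insert _ _⟩
    · rw [Finset.mem_insert] at hp hq
      rcases hp with (rfl | pf) <;> rcases hq with (rfl | qf)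
      · simp only [cmp_self_eq_eq]
      · exact (cmp_eq_cmp_symm.mp (a_b _ qf)).symm
      · exact (a_b _ pf).symm
      · exact f.prop.1 _ pf _ qf
    · rw [Finset.mem_insert] at hp
      rcases hp with (rfl | pf)
      · exact hac
      · exact f.prop.2 _ pf

/-- Colored back-and-forth: if both colors are dense, there is a color-preserving
order automorphism sending `p` to `q`. -/
theorem dense_case (H : ∀ (k : Bool) (x y : ℚ), x < y → ∃ z, x < z ∧ z < y ∧ c z = k)
    (p q : ℚ) (hcpq : c p = c q) :
    ∃ γ : ℚ ≃o ℚ, γ p = q ∧ ∀ x : ℚ, c (γ x) = c x := by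
  classical
  let f₀ : CPartialIso c :=
    ⟨{(p, q)}, by
      constructor
      · intro x hx y hy
        rw [Finset.mem_singleton] at hx hy
        subst hx; subst hy; simp [cmp_self_eq_eq]
      · intro x hx
        rw [Finset.mem_singleton] at hx
        subst hx; exact hcpq⟩
  let to_cofinal : ℚ ⊕ ℚ → Cofinal (CPartialIso c) := fun s =>
    Sum.recOn s (definedAtLeft H) (definedAtRight H)
  let our_ideal : Ideal (CPartialIso c) := idealOfCofinals f₀ to_cofinal
  have hmeetL : ∀ a : ℚ, ∃ f, f ∈ definedAtLeft H a ∧ f ∈ our_ideal := fun a =>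
    cofinal_meets_idealOfCofinals f₀ to_cofinal (Sum.inl a)
  have hmeetR : ∀ b : ℚ, ∃ f, f ∈ definedAtRight H b ∧ f ∈ our_ideal := fun b =>
    cofinal_meets_idealOfCofinals f₀ to_cofinal (Sum.inr b)
  have hF : ∀ a : ℚ, ∃ b : ℚ, ∃ f ∈ our_ideal, (a, b) ∈ f.val := by
    intro a; obtain ⟨f, ⟨b, hb⟩, hfI⟩ := hmeetL a; exact ⟨b, f, hfI, hb⟩
  have hG : ∀ b : ℚ, ∃ a : ℚ, ∃ f ∈ our_ideal, (a, b) ∈ f.val := by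
    intro b; obtain ⟨f, ⟨a, ha⟩, hfI⟩ := hmeetR b; exact ⟨a, f, hfI, ha⟩
  choose F hF' using hF
  choose G hG' using hG
  have key : ∀ a b : ℚ, cmp a (G b) = cmp (F a) b := by
    intro a b
    obtain ⟨f, hf, ha⟩ := hF' a
    obtain ⟨g, hg, hb⟩ := hG' b
    rcases our_ideal.directed _ hf _ hg with ⟨m, _, fm, gm⟩
    exact m.prop.1 (a, _) (fm ha) (_, b) (gm hb)
  refine ⟨OrderIso.ofCmpEqCmp F G key, ?_, ?_⟩
  · show F p = q
    obtain ⟨f, hf, ha⟩ := hF' p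
    rcases our_ideal.directed _ hf _ (mem_idealOfCofinals f₀ to_cofinal) with ⟨m, _, fm, f0m⟩
    have := m.prop.1 (p, F p) (fm ha) (p, q) (f0m (Finset.mem_singleton_self _))
    rw [cmp_self_eq_eq] at this
    exact (cmp_eq_eq_iff _ _).1 this.symm
  · intro x
    show c (F x) = c x
    obtain ⟨f, _, ha⟩ := hF' x
    exact (f.prop.2 _ ha).symm

/-- Extend an order automorphism of a rational interval by the identity. -/
theorem extend_case (a b : ℚ) (hab : a < b) (k : Bool)
    (hmono : ∀ z : ℚ, a < z → z < b → c z = k) :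
    ∃ γ : ℚ ≃o ℚ, γ ≠ OrderIso.refl ℚ ∧ ∀ x : ℚ, c (γ x) = c x := by
  classical
  have hne : Nonempty ↥(Set.Ioo a b) := ⟨⟨(a+b)/2, ⟨by linarith, by linarith⟩⟩⟩
  obtain ⟨e⟩ : Nonempty (↥(Set.Ioo a b) ≃o ℚ) := Order.iso_of_countable_dense _ _
  let ψ : ↥(Set.Ioo a b) ≃o ↥(Set.Ioo a b) := (e.trans (OrderIso.addRight 1)).trans e.symm
  have hψ : ∀ z, ψ z ≠ z := by
    intro z hz
    have : e (ψ z) = e z := by rw [hz]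
    simp only [ψ, OrderIso.trans_apply, OrderIso.apply_symm_apply, OrderIso.addRight_apply] at this
    linarith
  set f : ℚ → ℚ := fun x => if h : x ∈ Set.Ioo a b then (ψ ⟨x, h⟩ : ℚ) else x with hf
  have hmem : ∀ (x : ℚ) (h : x ∈ Set.Ioo a b), (ψ ⟨x, h⟩ : ℚ) ∈ Set.Ioo a b := fun x h =>
    (ψ ⟨x, h⟩).2
  have hsm : StrictMono f := by
    intro x y hxy
    by_cases hx : x ∈ Set.Ioo a b <;> by_cases hy : y ∈ Set.Ioo a b <;>
      simp only [hf, hx, hy, dif_pos, dif_neg, not_false_iff]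
    · exact_mod_cast ψ.strictMono (show (⟨x, hx⟩ : ↥(Set.Ioo a b)) < ⟨y, hy⟩ from hxy)
    · have h1 : (ψ ⟨x, hx⟩ : ℚ) < b := (hmem x hx).2
      have h2 : b ≤ y := by
        by_contra h
        push_neg at h
        exact hy ⟨lt_trans hx.1 hxy, h⟩
      linarith
    · have h1 : a < (ψ ⟨y, hy⟩ : ℚ) := (hmem y hy).1
      have h2 : x ≤ a := by
        by_contra h
        push_neg at h
        exact hx ⟨h, lt_trans hxy hy.2⟩
      linarith
    · exact hxy
  have hsurj : Function.Surjective f := by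
    intro y
    by_cases hy : y ∈ Set.Ioo a b
    · refine ⟨(ψ.symm ⟨y, hy⟩ : ℚ), ?_⟩
      have hm := (ψ.symm ⟨y, hy⟩).2
      simp only [hf, hm, dif_pos]
      rw [Subtype.coe_eta]
      exact congrArg Subtype.val (ψ.apply_symm_apply ⟨y, hy⟩)
    · exact ⟨y, by simp only [hf, hy, dif_neg, not_false_iff]⟩
  refine ⟨hsm.orderIsoOfSurjective f hsurj, ?_, ?_⟩
  · intro hcon
    obtain ⟨z⟩ := hne
    have h1 : f z = z := by
      have := congrArg (fun (g : ℚ ≃o ℚ) => g (z : ℚ)) hcon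
      simpa using this
    have h2 : f (z : ℚ) = (ψ z : ℚ) := by
      simp only [hf, z.2, dif_pos, Subtype.coe_eta]
    exact hψ z (Subtype.ext (h2 ▸ h1))
  · intro x
    show c (f x) = c x
    by_cases hx : x ∈ Set.Ioo a b
    · simp only [hf, hx, dif_pos]
      rw [hmono _ (hmem x hx).1 (hmem x hx).2, hmono _ hx.1 hx.2]
    · simp only [hf, hx, dif_neg, not_false_iff]

end QColorAux

theorem qNoTwoDistinguishing (c : ℚ → Bool) :
    ∃ γ : ℚ ≃o ℚ, γ ≠ OrderIso.refl ℚ ∧ ∀ q : ℚ, c (γ q) = c q := by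
  by_cases H : ∀ (k : Bool) (x y : ℚ), x < y → ∃ z, x < z ∧ z < y ∧ c z = k
  · obtain ⟨q, hq1, hq2, hq3⟩ := H (c 0) 0 1 (by norm_num)
    obtain ⟨γ, hγ1, hγ2⟩ := QColorAux.dense_case H 0 q hq3.symm
    refine ⟨γ, ?_, hγ2⟩
    intro hcon
    rw [hcon] at hγ1
    simp only [OrderIso.refl_apply] at hγ1
    exact absurd hγ1.symm (ne_of_gt hq1)
  · push_neg at H
    obtain ⟨k, x, y, hxy, hk⟩ := H
    refine QColorAux.extend_case x y hxy (!k) ?_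
    intro z hz1 hz2
    have := hk z hz1 hz2
    cases hzc : c z
    · cases k
      · exact absurd hzc this
      · rfl
    · cases k
      · rfl
      · exact absurd hzc this
end

section
/- In the graph G on ℚ⁺ ∪ ℚ⁻ with edges q⁺r⁻ for q < r, for every q ∈ ℚ the vertex q⁻ is the unique vertex w with N(w) = (⋂_{v ∈ N(q⁺)} N(v)) \ {q⁺}, where N denotes the neighbourhood. -/
open Sum

/-- The graph on two copies of ℚ with `inl q` adjacent to `inr r` iff `q < r`. -/
def G : SimpleGraph (ℚ ⊕ ℚ) where
  Adj u v := match u, v with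
    | .inl q, .inr r => q < r
    | .inr r, .inl q => q < r
    | _, _ => False
  symm := by constructor; intro u v h; cases u <;> cases v <;> simp_all
  loopless := by constructor; intro u h; cases u <;> simp_all

lemma G_adj_lr (a b : ℚ) : G.Adj (inl a) (inr b) ↔ a < b := Iff.rfl
lemma G_adj_rl (a b : ℚ) : G.Adj (inr a) (inl b) ↔ b < a := Iff.rfl
lemma G_adj_ll (a b : ℚ) : ¬ G.Adj (inl a) (inl b) := fun h => h
lemma G_adj_rr (a b : ℚ) : ¬ G.Adj (inr a) (inr b) := fun h => h

theorem G_minus_unique (q : ℚ) (w : ℚ ⊕ ℚ) :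
    G.neighborSet w =
      (⋂ v ∈ G.neighborSet (inl q), G.neighborSet v) \ {inl q} ↔ w = inr q := by
  have hset : ((⋂ v ∈ G.neighborSet (inl q), G.neighborSet v) \ {inl q} : Set (ℚ ⊕ ℚ))
      = G.neighborSet (inr q) := by
    ext x
    simp only [Set.mem_diff, Set.mem_iInter, SimpleGraph.mem_neighborSet,
      Set.mem_singleton_iff]
    cases x with
    | inl s =>
      simp only [G_adj_rl]
      constructor
      · rintro ⟨h, hne⟩
        have hsq : s ≠ q := fun hh => hne (congrArg inl hh)
        by_contra hs
        push_neg at hs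
        have hqs : q < s := lt_of_le_of_ne hs (Ne.symm hsq)
        have h2 := h (inr ((q + s)/2)) (by rw [G_adj_lr]; linarith)
        rw [G_adj_rl] at h2; linarith
      · intro hs
        refine ⟨fun v hv => ?_, by simp only [Set.mem_singleton_iff, inl.injEq]; exact hs.ne⟩
        cases v with
        | inl r => exact absurd hv (G_adj_ll _ _)
        | inr r =>
          rw [G_adj_lr] at hv; rw [G_adj_rl]; linarith
    | inr s =>
      constructor
      · rintro ⟨h, _⟩
        have := h (inr (q + 1)) (by rw [G_adj_lr]; linarith)
        exact absurd this (G_adj_rr _ _)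
      · intro h; exact absurd h (G_adj_rr _ _)
  rw [hset]
  constructor
  · intro h
    cases w with
    | inl p =>
      have : inl (q - 1) ∈ G.neighborSet (inl p) := by
        rw [h]; simp only [SimpleGraph.mem_neighborSet, G_adj_rl]; linarith
      exact absurd this (G_adj_ll p (q - 1))
    | inr p =>
      have key : ∀ s : ℚ, s < p ↔ s < q := by
        intro s
        have := Set.ext_iff.mp h (inl s)
        simpa only [SimpleGraph.mem_neighborSet, G_adj_rl] using this
      have : p = q := by
        by_contra hne
        rcases lt_or_gt_of_ne hne with h1 | h1
        · have := (key p).mpr (by linarith); linarith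
        · have := (key q).mp (by linarith); linarith
      exact congrArg inr this
  · rintro rfl; rfl
end

section
/- Every automorphism of the graph G on ℚ⁺ ∪ ℚ⁻ with edges q⁺r⁻ for q < r that swaps ℚ⁺ and ℚ⁻ is of the form γ↓ for some order automorphism γ of ℚ, where γ↓(q⁺) = (−γ q)⁻ and γ↓(q⁻) = (−γ q)⁺. -/
open Sum

theorem G_aut_swapping_is_down (φ : G ≃g G) (h : ∀ q : ℚ, ∃ r : ℚ, φ (inl q) = inr r) :
    ∃ γ : ℚ ≃o ℚ, ∀ q : ℚ, φ (inl q) = inr (-(γ q)) ∧ φ (inr q) = inl (-(γ q)) := by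
  choose f hf using h
  have h2 : ∀ q : ℚ, ∃ r : ℚ, φ (inr q) = inl r := by
    intro q
    have hadj : G.Adj (inl (q-1)) (inr q) := by show q - 1 < q; linarith
    have h3 : G.Adj (φ (inl (q-1))) (φ (inr q)) := φ.map_adj_iff.mpr hadj
    rw [hf] at h3
    cases hq : φ (inr q) with
    | inl r => exact ⟨r, rfl⟩
    | inr r => rw [hq] at h3; exact absurd h3 (by simp [G])
  choose g hg using h2
  have key : ∀ q r : ℚ, q < r ↔ g r < f q := by
    intro q r
    have h3 : G.Adj (φ (inl q)) (φ (inr r)) ↔ G.Adj (inl q) (inr r) := φ.map_adj_iff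
    rw [hf, hg] at h3
    constructor
    · intro hlt; exact h3.mpr hlt
    · intro hlt; exact h3.mp hlt
  have fle : ∀ q, f q ≤ g q := by
    intro q
    by_contra hc
    push_neg at hc
    exact lt_irrefl q ((key q q).mpr hc)
  have fsurj : Function.Surjective f := by
    intro t
    cases hq : φ.symm (inr t) with
    | inl q =>
      refine ⟨q, ?_⟩
      have h3 : φ (inl q) = inr t := by rw [← hq]; exact φ.apply_symm_apply _
      rw [hf] at h3
      exact inr_injective h3
    | inr q =>
      have h3 : φ (inr q) = inr t := by rw [← hq]; exact φ.apply_symm_apply _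
      rw [hg] at h3
      simp at h3
  have gsurj : Function.Surjective g := by
    intro t
    cases hq : φ.symm (inl t) with
    | inr q =>
      refine ⟨q, ?_⟩
      have h3 : φ (inr q) = inl t := by rw [← hq]; exact φ.apply_symm_apply _
      rw [hg] at h3
      exact inl_injective h3
    | inl q =>
      have h3 : φ (inl q) = inl t := by rw [← hq]; exact φ.apply_symm_apply _
      rw [hf] at h3
      simp at h3
  have ganti : StrictAnti g := by
    intro a b hab
    exact lt_of_lt_of_le ((key a b).mp hab) (fle a)
  have fg : ∀ q, f q = g q := by
    intro q
    rcases lt_or_eq_of_le (fle q) with hlt | he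
    · exfalso
      obtain ⟨t, ht1, ht2⟩ := exists_between hlt
      obtain ⟨r, hr⟩ := gsurj t
      rw [← hr] at ht1 ht2
      have hqr : q < r := by
        rcases lt_trichotomy q r with h' | h' | h'
        · exact h'
        · exact absurd (h' ▸ ht2) (lt_irrefl _)
        · exact absurd (ganti h') (not_lt.mpr (le_of_lt ht2))
      exact absurd ((key q r).mp hqr) (not_lt.mpr (le_of_lt ht1))
    · exact he
  have fmono : StrictMono (fun q => -(f q)) := by
    intro a b hab
    simp only [neg_lt_neg_iff]
    calc f b = g b := fg b
    _ < f a := (key a b).mp hab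
  have nsurj : Function.Surjective (fun q => -(f q)) := by
    intro t
    obtain ⟨q, hq⟩ := fsurj (-t)
    exact ⟨q, by simp [hq]⟩
  refine ⟨StrictMono.orderIsoOfSurjective _ fmono nsurj, fun q => ?_⟩
  have : (StrictMono.orderIsoOfSurjective _ fmono nsurj) q = -(f q) := rfl
  rw [this, neg_neg, hf, hg, fg]
  exact ⟨rfl, rfl⟩
end

section
/- There exists a countable, connected graph with infinite motion (every non-trivial automorphism moves infinitely many vertices) that has no distinguishing colouring with any finite number of colours. -/
open Function Set Classical

noncomputable section

namespace NoFD

/-! ### The graph on ℚ ⊕ ℚ -/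

def myAdj : ℚ ⊕ ℚ → ℚ ⊕ ℚ → Prop
  | Sum.inl q, Sum.inr r => q < r
  | Sum.inr r, Sum.inl q => q < r
  | _, _ => False

def myG : SimpleGraph (ℚ ⊕ ℚ) where
  Adj := myAdj
  symm := ⟨by rintro (q | q) (r | r) h <;> exact h⟩
  loopless := ⟨by rintro (q | q) h <;> exact h⟩

lemma adj_inl_inr {q r : ℚ} : myG.Adj (Sum.inl q) (Sum.inr r) ↔ q < r := Iff.rfl
lemma adj_inr_inl {q r : ℚ} : myG.Adj (Sum.inr r) (Sum.inl q) ↔ q < r := Iff.rfl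
lemma not_adj_inl_inl {q r : ℚ} : ¬ myG.Adj (Sum.inl q) (Sum.inl r) := fun h => h
lemma not_adj_inr_inr {q r : ℚ} : ¬ myG.Adj (Sum.inr q) (Sum.inr r) := fun h => h

/-! ### Back-and-forth machinery for coloured dense orders -/

variable {C : Type}

/-- Every colour appearing in `(a,b)` appears in every subinterval. -/
def Dense' (c : ℚ → C) (a b : ℚ) : Prop :=
  ∀ x, a < x → x < b → ∀ u v, a ≤ u → u < v → v ≤ b → ∃ z, u < z ∧ z < v ∧ c z = c x

/-- Invariant for finite partial colour-preserving order isomorphisms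
supported in `(a, b)`. -/
def Inv (c : ℚ → C) (a b : ℚ) (s : Finset (ℚ × ℚ)) : Prop :=
  (∀ pr ∈ s, (a < pr.1 ∧ pr.1 < b) ∧ (a < pr.2 ∧ pr.2 < b) ∧ c pr.1 = c pr.2) ∧
  ∀ pr ∈ s, ∀ pr' ∈ s, (pr.1 < pr'.1 ↔ pr.2 < pr'.2)

lemma Inv.swap {c : ℚ → C} {a b : ℚ} {s : Finset (ℚ × ℚ)} (hs : Inv c a b s) :
    Inv c a b (s.image Prod.swap) := by
  constructor
  · intro pr hpr
    obtain ⟨pr₀, h₀, rfl⟩ := Finset.mem_image.mp hpr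
    obtain ⟨h1, h2, h3⟩ := hs.1 pr₀ h₀
    exact ⟨h2, h1, h3.symm⟩
  · intro pr hpr pr' hpr'
    obtain ⟨pr₀, h₀, rfl⟩ := Finset.mem_image.mp hpr
    obtain ⟨pr₀', h₀', rfl⟩ := Finset.mem_image.mp hpr'
    exact (hs.2 pr₀ h₀ pr₀' h₀').symm

lemma forth {c : ℚ → C} {a b : ℚ} (hD : Dense' c a b) {s : Finset (ℚ × ℚ)}
    (hs : Inv c a b s) {x : ℚ} (hx : a < x ∧ x < b) :
    ∃ y, Inv c a b (insert (x, y) s) := by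
  classical
  by_cases hex : ∃ y, (x, y) ∈ s
  · obtain ⟨y, hy⟩ := hex
    exact ⟨y, by rwa [Finset.insert_eq_self.mpr hy]⟩
  push_neg at hex
  set L : Finset ℚ := insert a ((s.filter (fun pr => pr.1 < x)).image Prod.snd) with hL
  set R : Finset ℚ := insert b ((s.filter (fun pr => x < pr.1)).image Prod.snd) with hR
  have hLne : L.Nonempty := ⟨a, Finset.mem_insert_self _ _⟩
  have hRne : R.Nonempty := ⟨b, Finset.mem_insert_self _ _⟩
  set u := L.max' hLne with hu
  set v := R.min' hRne with hv
  have hmemL : ∀ w ∈ L, w = a ∨ ∃ pr ∈ s, pr.1 < x ∧ pr.2 = w := by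
    intro w hw
    rcases Finset.mem_insert.mp hw with h | h
    · exact Or.inl h
    · obtain ⟨pr, hpr, rfl⟩ := Finset.mem_image.mp h
      obtain ⟨hpr1, hpr2⟩ := Finset.mem_filter.mp hpr
      exact Or.inr ⟨pr, hpr1, hpr2, rfl⟩
  have hmemR : ∀ w ∈ R, w = b ∨ ∃ pr ∈ s, x < pr.1 ∧ pr.2 = w := by
    intro w hw
    rcases Finset.mem_insert.mp hw with h | h
    · exact Or.inl h
    · obtain ⟨pr, hpr, rfl⟩ := Finset.mem_image.mp h
      obtain ⟨hpr1, hpr2⟩ := Finset.mem_filter.mp hpr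
      exact Or.inr ⟨pr, hpr1, hpr2, rfl⟩
  have huv : u < v := by
    rw [hu, Finset.max'_lt_iff]
    intro w hw
    rw [hv, Finset.lt_min'_iff]
    intro z hz
    rcases hmemL w hw with rfl | ⟨pr, hpr, hprx, rfl⟩ <;>
      rcases hmemR z hz with rfl | ⟨pr', hpr', hpr'x, rfl⟩
    · exact hx.1.trans hx.2
    · exact (hs.1 pr' hpr').2.1.1
    · exact (hs.1 pr hpr).2.1.2
    · exact (hs.2 pr hpr pr' hpr').mp (hprx.trans hpr'x)
  have hau : a ≤ u := Finset.le_max' _ _ (Finset.mem_insert_self _ _)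
  have hvb : v ≤ b := Finset.min'_le _ _ (Finset.mem_insert_self _ _)
  obtain ⟨y, hy1, hy2, hy3⟩ := hD x hx.1 hx.2 u v hau huv hvb
  have hlt_of : ∀ pr ∈ s, pr.1 < x → pr.2 < y := by
    intro pr hpr h
    have : pr.2 ∈ L := Finset.mem_insert_of_mem
      (Finset.mem_image.mpr ⟨pr, Finset.mem_filter.mpr ⟨hpr, h⟩, rfl⟩)
    exact lt_of_le_of_lt (Finset.le_max' _ _ this) hy1
  have hgt_of : ∀ pr ∈ s, x < pr.1 → y < pr.2 := by
    intro pr hpr h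
    have : pr.2 ∈ R := Finset.mem_insert_of_mem
      (Finset.mem_image.mpr ⟨pr, Finset.mem_filter.mpr ⟨hpr, h⟩, rfl⟩)
    exact lt_of_lt_of_le hy2 (Finset.min'_le _ _ this)
  have hne : ∀ pr ∈ s, pr.1 ≠ x := by
    intro pr hpr h
    exact hex pr.2 (by rw [← h]; exact hpr)
  refine ⟨y, ?_, ?_⟩
  · intro pr hpr
    rcases Finset.mem_insert.mp hpr with rfl | h
    · exact ⟨hx, ⟨lt_of_le_of_lt hau hy1, lt_of_lt_of_le hy2 hvb⟩, hy3.symm⟩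
    · exact hs.1 pr h
  · intro pr hpr pr' hpr'
    rcases Finset.mem_insert.mp hpr with rfl | h <;>
      rcases Finset.mem_insert.mp hpr' with rfl | h'
    · simp
    · constructor
      · intro hlt
        exact hgt_of pr' h' hlt
      · intro hlt
        rcases lt_trichotomy x pr'.1 with hc | hc | hc
        · exact hc
        · exact absurd hc.symm (hne pr' h')
        · exact absurd hlt (not_lt.mpr (le_of_lt (hlt_of pr' h' hc)))
    · constructor
      · intro hlt
        exact hlt_of pr h hlt
      · intro hlt
        rcases lt_trichotomy pr.1 x with hc | hc | hc
        · exact hc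
        · exact absurd hc (hne pr h)
        · exact absurd hlt (not_lt.mpr (le_of_lt (hgt_of pr h hc)))
    · exact hs.2 pr h pr' h'

lemma image_swap_swap (s : Finset (ℚ × ℚ)) : (s.image Prod.swap).image Prod.swap = s := by
  rw [Finset.image_image]
  simp

lemma back {c : ℚ → C} {a b : ℚ} (hD : Dense' c a b) {s : Finset (ℚ × ℚ)}
    (hs : Inv c a b s) {y : ℚ} (hy : a < y ∧ y < b) :
    ∃ x, Inv c a b (insert (x, y) s) := by
  obtain ⟨x, hx⟩ := forth hD hs.swap hy
  refine ⟨x, ?_⟩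
  have := hx.swap
  rwa [Finset.image_insert, Prod.swap_prod_mk, image_swap_swap] at this

lemma stepEx {c : ℚ → C} {a b : ℚ} (hD : Dense' c a b) {s : Finset (ℚ × ℚ)}
    (hs : Inv c a b s) (x : ℚ) :
    ∃ t : Finset (ℚ × ℚ), s ⊆ t ∧ Inv c a b t ∧
      ((a < x ∧ x < b) → (∃ y, (x, y) ∈ t) ∧ (∃ z, (z, x) ∈ t)) := by
  by_cases hx : a < x ∧ x < b
  · obtain ⟨y, hy⟩ := forth hD hs hx
    obtain ⟨z, hz⟩ := back hD hy hx
    refine ⟨insert (z, x) (insert (x, y) s),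
      Finset.Subset.trans (Finset.subset_insert _ _) (Finset.subset_insert _ _), hz,
      fun _ => ⟨⟨y, ?_⟩, ⟨z, Finset.mem_insert_self _ _⟩⟩⟩
    exact Finset.mem_insert_of_mem (Finset.mem_insert_self _ _)
  · exact ⟨s, Finset.Subset.refl _, hs, fun h => absurd h hx⟩

noncomputable def seq (c : ℚ → C) (a b : ℚ) (hD : Dense' c a b)
    (s₀ : {s : Finset (ℚ × ℚ) // Inv c a b s}) (e : ℕ → ℚ) :
    ℕ → {s : Finset (ℚ × ℚ) // Inv c a b s}
  | 0 => s₀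
  | n + 1 =>
    ⟨Classical.choose (stepEx hD (seq c a b hD s₀ e n).2 (e n)),
      (Classical.choose_spec (stepEx hD (seq c a b hD s₀ e n).2 (e n))).2.1⟩

lemma seq_subset_succ (c : ℚ → C) (a b : ℚ) (hD : Dense' c a b)
    (s₀ : {s : Finset (ℚ × ℚ) // Inv c a b s}) (e : ℕ → ℚ) (n : ℕ) :
    (seq c a b hD s₀ e n).1 ⊆ (seq c a b hD s₀ e (n + 1)).1 :=
  (Classical.choose_spec (stepEx hD (seq c a b hD s₀ e n).2 (e n))).1

lemma seq_mono (c : ℚ → C) (a b : ℚ) (hD : Dense' c a b)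
    (s₀ : {s : Finset (ℚ × ℚ) // Inv c a b s}) (e : ℕ → ℚ) {m n : ℕ} (h : m ≤ n) :
    (seq c a b hD s₀ e m).1 ⊆ (seq c a b hD s₀ e n).1 := by
  induction n with
  | zero => rw [Nat.le_zero.mp h]
  | succ n ih =>
    rcases Nat.le_succ_iff.mp h with h' | h'
    · exact Finset.Subset.trans (ih h') (seq_subset_succ c a b hD s₀ e n)
    · rw [h']

lemma seq_spec (c : ℚ → C) (a b : ℚ) (hD : Dense' c a b)
    (s₀ : {s : Finset (ℚ × ℚ) // Inv c a b s}) (e : ℕ → ℚ) (n : ℕ)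
    (h : a < e n ∧ e n < b) :
    (∃ y, (e n, y) ∈ (seq c a b hD s₀ e (n + 1)).1) ∧
    (∃ z, (z, e n) ∈ (seq c a b hD s₀ e (n + 1)).1) :=
  (Classical.choose_spec (stepEx hD (seq c a b hD s₀ e n).2 (e n))).2.2 h

/-- The key lemma: every colouring of ℚ by finitely many colours admits a
nontrivial colour-preserving order automorphism. -/
lemma keyQ {C : Type} [Finite C] (c : ℚ → C) :
    ∃ (F : ℚ ≃o ℚ) (p : ℚ), F p ≠ p ∧ ∀ x, c (F x) = c x := by
  classical
  haveI := Fintype.ofFinite C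
  -- find an interval with minimal colour support
  set supp : ℚ → ℚ → Finset C :=
    fun a b => Finset.univ.filter (fun k => ∃ q, a < q ∧ q < b ∧ c q = k) with hsupp
  have hP : ∃ n : ℕ, ∃ a b : ℚ, a < b ∧ (supp a b).card = n :=
    ⟨(supp 0 1).card, 0, 1, by norm_num, rfl⟩
  obtain ⟨a, b, hab, hcard⟩ := Nat.find_spec hP
  have hD : Dense' c a b := by
    intro x hax hxb u v hau huv hvb
    have hsubset : supp u v ⊆ supp a b := by
      intro k hk
      obtain ⟨_, q, h1, h2, h3⟩ := Finset.mem_filter.mp hk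
      exact Finset.mem_filter.mpr ⟨Finset.mem_univ _,
        q, lt_of_le_of_lt hau h1, lt_of_lt_of_le h2 hvb, h3⟩
    have hle : Nat.find hP ≤ (supp u v).card := Nat.find_min' hP ⟨u, v, huv, rfl⟩
    have heq : supp u v = supp a b :=
      Finset.eq_of_subset_of_card_le hsubset (by omega)
    have hx : c x ∈ supp a b :=
      Finset.mem_filter.mpr ⟨Finset.mem_univ _, x, hax, hxb, rfl⟩
    rw [← heq] at hx
    obtain ⟨_, z, h1, h2, h3⟩ := Finset.mem_filter.mp hx
    exact ⟨z, h1, h2, h3⟩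
  -- pick two points of the same colour
  set p : ℚ := (a + b) / 2 with hp
  have hap : a < p := by rw [hp]; linarith
  have hpb : p < b := by rw [hp]; linarith
  obtain ⟨q, hpq, hqb, hcq⟩ := hD p hap hpb p b (le_of_lt hap) hpb le_rfl
  have hinv0 : Inv c a b ({(p, q)} : Finset (ℚ × ℚ)) := by
    constructor
    · intro pr hpr
      rw [Finset.mem_singleton] at hpr
      subst hpr
      exact ⟨⟨hap, hpb⟩, ⟨hap.trans hpq, hqb⟩, hcq.symm⟩
    · intro pr hpr pr' hpr'
      rw [Finset.mem_singleton] at hpr hpr'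
      subst hpr; subst hpr'
      simp
  set s₀ : {s : Finset (ℚ × ℚ) // Inv c a b s} := ⟨{(p, q)}, hinv0⟩ with hs₀
  set e : ℕ → ℚ := ⇑(Denumerable.eqv ℚ).symm with he
  have hesurj : Surjective e := (Denumerable.eqv ℚ).symm.surjective
  set S : ℕ → {s : Finset (ℚ × ℚ) // Inv c a b s} := seq c a b hD s₀ e with hS
  -- facts about the union relation
  have mem_bounds : ∀ n pr, pr ∈ (S n).1 →
      (a < pr.1 ∧ pr.1 < b) ∧ (a < pr.2 ∧ pr.2 < b) ∧ c pr.1 = c pr.2 :=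
    fun n pr h => (S n).2.1 pr h
  have cross : ∀ {m n : ℕ} {pr pr' : ℚ × ℚ}, pr ∈ (S m).1 → pr' ∈ (S n).1 →
      (pr.1 < pr'.1 ↔ pr.2 < pr'.2) := by
    intro m n pr pr' hm hn
    have h1 : pr ∈ (S (max m n)).1 := seq_mono c a b hD s₀ e (le_max_left m n) hm
    have h2 : pr' ∈ (S (max m n)).1 := seq_mono c a b hD s₀ e (le_max_right m n) hn
    exact (S (max m n)).2.2 pr h1 pr' h2
  have fun_uniq : ∀ {x y y' : ℚ}, (∃ n, (x, y) ∈ (S n).1) → (∃ n, (x, y') ∈ (S n).1) →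
      y = y' := by
    rintro x y y' ⟨m, hm⟩ ⟨n, hn⟩
    have h1 := cross hm hn
    have h2 := cross hn hm
    simp only at h1 h2
    have ha : ¬ y < y' := fun h => lt_irrefl x (h1.mpr h)
    have hb : ¬ y' < y := fun h => lt_irrefl x (h2.mpr h)
    exact le_antisymm (not_lt.mp hb) (not_lt.mp ha)
  have total : ∀ x : ℚ, (a < x ∧ x < b) → ∃ y, ∃ n, (x, y) ∈ (S n).1 := by
    intro x hx
    obtain ⟨n, rfl⟩ := hesurj x
    obtain ⟨y, hy⟩ := (seq_spec c a b hD s₀ e n hx).1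
    exact ⟨y, n + 1, hy⟩
  have cototal : ∀ y : ℚ, (a < y ∧ y < b) → ∃ x, ∃ n, (x, y) ∈ (S n).1 := by
    intro y hy
    obtain ⟨n, rfl⟩ := hesurj y
    obtain ⟨x, hx⟩ := (seq_spec c a b hD s₀ e n hy).2
    exact ⟨x, n + 1, hx⟩
  set f : ℚ → ℚ := fun x => if h : a < x ∧ x < b then Classical.choose (total x h) else x
    with hf
  have hf_in : ∀ x (h : a < x ∧ x < b), ∃ n, (x, f x) ∈ (S n).1 := by
    intro x h
    simp only [hf, dif_pos h]
    exact Classical.choose_spec (total x h)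
  have hf_bounds : ∀ x, a < x ∧ x < b → a < f x ∧ f x < b := by
    intro x h
    obtain ⟨n, hn⟩ := hf_in x h
    exact (mem_bounds n _ hn).2.1
  have hf_eq : ∀ x, ¬ (a < x ∧ x < b) → f x = x := by
    intro x h
    simp only [hf, dif_neg h]
  have hmono : StrictMono f := by
    intro x₁ x₂ hlt
    by_cases h₁ : a < x₁ ∧ x₁ < b <;> by_cases h₂ : a < x₂ ∧ x₂ < b
    · obtain ⟨m, hm⟩ := hf_in x₁ h₁
      obtain ⟨n, hn⟩ := hf_in x₂ h₂
      exact (cross hm hn).mp hlt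
    · have hb2 : b ≤ x₂ := by
        rcases not_and_or.mp h₂ with h | h
        · exact absurd (h₁.1.trans hlt) h
        · exact not_lt.mp h
      rw [hf_eq x₂ h₂]
      exact lt_of_lt_of_le (hf_bounds x₁ h₁).2 hb2
    · rcases not_and_or.mp h₁ with h | h
      · have ha1 : x₁ ≤ a := not_lt.mp h
        rw [hf_eq x₁ h₁]
        exact lt_of_le_of_lt ha1 (hf_bounds x₂ h₂).1
      · exact absurd (lt_of_le_of_lt (not_lt.mp h) (hlt.trans h₂.2)) (lt_irrefl b)
    · rw [hf_eq x₁ h₁, hf_eq x₂ h₂]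
      exact hlt
  have hsurj : Surjective f := by
    intro y
    by_cases hy : a < y ∧ y < b
    · obtain ⟨x, n, hxy⟩ := cototal y hy
      have hx : a < x ∧ x < b := (mem_bounds n _ hxy).1
      exact ⟨x, fun_uniq (hf_in x hx) ⟨n, hxy⟩⟩
    · exact ⟨y, hf_eq y hy⟩
  have hcol : ∀ x, c (f x) = c x := by
    intro x
    by_cases hx : a < x ∧ x < b
    · obtain ⟨n, hn⟩ := hf_in x hx
      exact ((mem_bounds n _ hn).2.2).symm
    · rw [hf_eq x hx]
  have hfp : f p = q := by
    have h0 : (p, q) ∈ (S 0).1 := Finset.mem_singleton_self _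
    exact fun_uniq (hf_in p ⟨hap, hpb⟩) ⟨0, h0⟩
  refine ⟨StrictMono.orderIsoOfSurjective f hmono hsurj, p, ?_, ?_⟩
  · rw [show (StrictMono.orderIsoOfSurjective f hmono hsurj) p = f p from rfl, hfp]
    exact ne_of_gt hpq
  · intro x
    rw [show (StrictMono.orderIsoOfSurjective f hmono hsurj) x = f x from rfl]
    exact hcol x

/-! ### Auxiliary facts about rational intervals -/

lemma interval_infinite {x y : ℚ} (h : x < y) : {r : ℚ | x < r ∧ r < y}.Infinite := by
  have hpos : (0 : ℚ) < y - x := by linarith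
  apply Set.infinite_of_injective_forall_mem
    (f := fun n : ℕ => x + (y - x) / ((n : ℚ) + 2))
  · have hanti : StrictAnti (fun n : ℕ => x + (y - x) / ((n : ℚ) + 2)) := by
      intro m n hmn
      have h2 : (0 : ℚ) < (m : ℚ) + 2 := by positivity
      have h3 : (m : ℚ) + 2 < (n : ℚ) + 2 := by
        have : (m : ℚ) < n := by exact_mod_cast hmn
        linarith
      have := div_lt_div_of_pos_left hpos h2 h3
      simpa using this
    exact hanti.injective
  · intro n
    have hn0 : (0 : ℚ) ≤ (n : ℚ) := Nat.cast_nonneg n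
    have h1 : (1 : ℚ) < (n : ℚ) + 2 := by linarith
    have h2 := div_lt_self hpos h1
    have h3 : (0 : ℚ) < (y - x) / ((n : ℚ) + 2) := by positivity
    exact ⟨by linarith, by linarith⟩

lemma above_infinite (q : ℚ) : {r : ℚ | q < r}.Infinite := by
  apply Set.infinite_of_injective_forall_mem (f := fun n : ℕ => q + (n : ℚ) + 1)
  · intro m n h
    simp only [add_left_inj, add_right_inj, Nat.cast_inj] at h
    exact h
  · intro n
    have : (0 : ℚ) ≤ (n : ℚ) := Nat.cast_nonneg n
    simp only [Set.mem_setOf_eq]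
    linarith

/-! ### Connectivity -/

lemma myG_connected : myG.Connected := by
  have hreach_ll : ∀ q q' : ℚ, myG.Reachable (Sum.inl q) (Sum.inl q') := by
    intro q q'
    have h1 : myG.Adj (Sum.inl q) (Sum.inr (max q q' + 1)) :=
      adj_inl_inr.mpr (by have := le_max_left q q'; linarith)
    have h2 : myG.Adj (Sum.inl q') (Sum.inr (max q q' + 1)) :=
      adj_inl_inr.mpr (by have := le_max_right q q'; linarith)
    exact h1.reachable.trans h2.reachable.symm
  have hreach_rl : ∀ r : ℚ, myG.Reachable (Sum.inr r) (Sum.inl (r - 1)) := by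
    intro r
    exact (adj_inr_inl.mpr (by linarith)).reachable
  constructor
  · intro v w
    cases v with
    | inl q =>
      cases w with
      | inl q' => exact hreach_ll q q'
      | inr r => exact (hreach_ll q (r - 1)).trans (hreach_rl r).symm
    | inr r =>
      cases w with
      | inl q' => exact (hreach_rl r).trans (hreach_ll (r - 1) q')
      | inr r' => exact (hreach_rl r).trans ((hreach_ll (r - 1) (r' - 1)).trans (hreach_rl r').symm)

/-! ### Infinite motion -/

lemma myG_fixed_of_finite_motion (φ : myG ≃g myG)
    (hfin : {v : ℚ ⊕ ℚ | φ v ≠ v}.Finite) : ∀ v, φ v = v := by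
  have hMr : {r : ℚ | φ (Sum.inr r) ≠ Sum.inr r}.Finite := by
    have : {r : ℚ | φ (Sum.inr r) ≠ Sum.inr r} = Sum.inr ⁻¹' {v | φ v ≠ v} := rfl
    rw [this]
    exact hfin.preimage Sum.inr_injective.injOn
  -- every inl vertex is fixed
  have hinl : ∀ q : ℚ, φ (Sum.inl q) = Sum.inl q := by
    intro q
    by_contra hne
    rcases hv : φ (Sum.inl q) with q' | r'
    · -- φ (inl q) = inl q' with q' ≠ q
      have hqq' : q' ≠ q := by
        intro h; rw [h] at hv; exact hne hv
      rcases lt_or_gt_of_ne hqq' with h | h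
      · -- q' < q : pick a fixed r with q' < r < q
        obtain ⟨r, hr, hrM⟩ := ((interval_infinite h).diff hMr).nonempty
        have hfix : φ (Sum.inr r) = Sum.inr r := not_not.mp hrM
        have hiff : q' < r ↔ q < r := by
          have := SimpleGraph.Iso.map_adj_iff φ (v := Sum.inl q) (w := Sum.inr r)
          rw [hv, hfix] at this
          exact this
        exact absurd (hiff.mp hr.1) (not_lt.mpr (le_of_lt hr.2))
      · -- q < q' : pick a fixed r with q < r < q'
        have h' : q < q' := gt_iff_lt.mp h
        obtain ⟨r, hr, hrM⟩ := ((interval_infinite h').diff hMr).nonempty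
        have hfix : φ (Sum.inr r) = Sum.inr r := not_not.mp hrM
        have hiff : q' < r ↔ q < r := by
          have := SimpleGraph.Iso.map_adj_iff φ (v := Sum.inl q) (w := Sum.inr r)
          rw [hv, hfix] at this
          exact this
        exact absurd (hiff.mpr hr.1) (not_lt.mpr (le_of_lt hr.2))
    · -- φ (inl q) = inr r' : impossible
      obtain ⟨r, hr, hrM⟩ := ((above_infinite q).diff hMr).nonempty
      have hfix : φ (Sum.inr r) = Sum.inr r := not_not.mp hrM
      have hadj : myG.Adj (Sum.inl q) (Sum.inr r) := adj_inl_inr.mpr hr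
      have := (SimpleGraph.Iso.map_adj_iff φ (v := Sum.inl q) (w := Sum.inr r)).mpr hadj
      rw [hv, hfix] at this
      exact not_adj_inr_inr this
  -- now the inr vertices
  intro v
  cases v with
  | inl q => exact hinl q
  | inr r =>
    rcases hv : φ (Sum.inr r) with q' | r'
    · have hadj : myG.Adj (Sum.inl (r - 1)) (Sum.inr r) := adj_inl_inr.mpr (by linarith)
      have := (SimpleGraph.Iso.map_adj_iff φ (v := Sum.inl (r - 1)) (w := Sum.inr r)).mpr hadj
      rw [hv, hinl (r - 1)] at this
      exact absurd this not_adj_inl_inl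
    · have hiff : ∀ t : ℚ, t < r' ↔ t < r := by
        intro t
        have := SimpleGraph.Iso.map_adj_iff φ (v := Sum.inl t) (w := Sum.inr r)
        rw [hv, hinl t] at this
        exact this
      have h1 : ¬ r < r' := fun h => lt_irrefl r ((hiff r).mp h)
      have h2 : ¬ r' < r := fun h => lt_irrefl r' ((hiff r').mpr h)
      congr 1
      exact le_antisymm (not_lt.mp h1) (not_lt.mp h2)

/-! ### The colour-preserving automorphism from an order automorphism -/

def sumIso (f : ℚ ≃o ℚ) : myG ≃g myG where
  toEquiv := Equiv.sumCongr f.toEquiv f.toEquiv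
  map_rel_iff' := by
    intro v w
    cases v <;> cases w <;>
      simp only [Equiv.sumCongr_apply, Sum.map_inl, Sum.map_inr] <;>
      first
        | exact Iff.rfl
        | exact f.lt_iff_lt

end NoFD

theorem exists_countable_connected_infinite_motion_no_finite_distinguishing :
    ∃ (V : Type) (G : SimpleGraph V), Countable V ∧ G.Connected ∧
      (∀ φ : G ≃g G, φ ≠ (SimpleGraph.Iso.refl : G ≃g G) → {v : V | φ v ≠ v}.Infinite) ∧
      (∀ (C : Type), Finite C → ∀ c : V → C,
        ∃ φ : G ≃g G, φ ≠ (SimpleGraph.Iso.refl : G ≃g G) ∧ ∀ v : V, c (φ v) = c v) := by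
  refine ⟨ℚ ⊕ ℚ, NoFD.myG, inferInstance, NoFD.myG_connected, ?_, ?_⟩
  · intro φ hne
    by_contra hinf
    apply hne
    have hfin := Set.not_infinite.mp hinf
    exact RelIso.ext (NoFD.myG_fixed_of_finite_motion φ hfin)
  · intro C hC c
    haveI := hC
    obtain ⟨F, p, hFp, hcol⟩ :=
      NoFD.keyQ (C := C × C) (fun q => (c (Sum.inl q), c (Sum.inr q)))
    refine ⟨NoFD.sumIso F, ?_, ?_⟩
    · intro h
      have h1 : (NoFD.sumIso F) (Sum.inl p) = Sum.inl p := by rw [h]; rfl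
      have h2 : (Sum.inl (F p) : ℚ ⊕ ℚ) = Sum.inl p := h1
      exact hFp (Sum.inl.inj h2)
    · intro v
      cases v with
      | inl q =>
        show c (Sum.inl (F q)) = c (Sum.inl q)
        exact congrArg Prod.fst (hcol q)
      | inr q =>
        show c (Sum.inr (F q)) = c (Sum.inr q)
        exact congrArg Prod.snd (hcol q)
end
end
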